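/- Let Λ be a non-ordinary numerical semigroup with conductor c = c(Λ) and ω = ω(Λ), and suppose c + 1 is a right generator of Λ. Let Λ̃ = Λ ∖ {c+1} and ω̃ = ω(Λ̃). Then ω̃ = gcd(ω, c), shrink(Λ̃) = (ω/ω̃)·shrink(Λ) + (c/ω̃)·ℕ, and c(shrink(Λ̃)) ≤ c(shrink(Λ))·(ω/ω̃) + (c/ω̃ − 1)·(ω/ω̃ − 1). -/

import Mathlib

open Pointwise

namespace NumSgpPaper

/-- `S` is a numerical semigroup: an additive submonoid of ℕ with finite complement. -/
structure IsNumSgp (S : Set ℕ) : Prop where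
  zero_mem : 0 ∈ S
  add_mem : ∀ ⦃a b : ℕ⦄, a ∈ S → b ∈ S → a + b ∈ S
  cofinite : Sᶜ.Finite

/-- The Frobenius number: the largest gap of `S` (junk value `0` if there are no gaps). -/
noncomputable def frob (S : Set ℕ) : ℕ := sSup Sᶜ

open Classical in
/-- The conductor: one plus the largest gap, and `0` if there are no gaps (so `c(ℕ) = 0`). -/
noncomputable def conductor (S : Set ℕ) : ℕ := if Sᶜ = ∅ then 0 else frob S + 1

/-- The genus: the number of gaps. -/
noncomputable def genus (S : Set ℕ) : ℕ := Sᶜ.ncard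

/-- The multiplicity: the smallest positive element. -/
noncomputable def mult (S : Set ℕ) : ℕ := sInf {n : ℕ | n ∈ S ∧ 0 < n}

/-- The jump: the difference between the second and first positive elements. -/
noncomputable def jump (S : Set ℕ) : ℕ := sInf {n : ℕ | n ∈ S ∧ mult S < n} - mult S

/-- A minimal generator: a positive element of `S` that is not the sum of
two positive elements of `S`. -/
def IsMinGen (S : Set ℕ) (x : ℕ) : Prop :=
  0 < x ∧ x ∈ S ∧ ¬ ∃ a b : ℕ, 0 < a ∧ 0 < b ∧ a ∈ S ∧ b ∈ S ∧ a + b = x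

/-- A right generator: a minimal generator larger than the Frobenius number. -/
def IsRightGen (S : Set ℕ) (x : ℕ) : Prop := IsMinGen S x ∧ frob S < x

/-- A strong generator: a right generator `σ` such that `σ + m(S)` is a minimal
generator of `S \ {σ}`. -/
def IsStrongGen (S : Set ℕ) (σ : ℕ) : Prop :=
  IsRightGen S σ ∧ IsMinGen (S \ {σ}) (σ + mult S)

/-- `S` is ordinary when its gaps are exactly `{1, …, g(S)}`. -/
def IsOrdinary (S : Set ℕ) : Prop := Sᶜ = Set.Icc 1 (genus S)

/-- The left elements: the elements of `S` smaller than the Frobenius number. -/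
def leftEls (S : Set ℕ) : Set ℕ := {x : ℕ | x ∈ S ∧ x < frob S}

/-- The gcd of a set of natural numbers. -/
noncomputable def setGcd (A : Set ℕ) : ℕ :=
  sInf {d : ℕ | (∀ a ∈ A, d ∣ a) ∧ ∀ e : ℕ, (∀ a ∈ A, e ∣ a) → e ∣ d}

/-- `ω(S)`: the gcd of the left elements of `S`. -/
noncomputable def omega' (S : Set ℕ) : ℕ := setGcd (leftEls S)

/-- The shrinking of `S`: the additive submonoid of ℕ generated by the left
elements divided by their gcd. -/
noncomputable def shrink (S : Set ℕ) : Set ℕ :=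
  (AddSubmonoid.closure ((fun x => x / omega' S) '' leftEls S) : AddSubmonoid ℕ)

/-- `T` is a descendant of `S`: a numerical semigroup contained in `S` all of whose
missing elements lie beyond the Frobenius number of `S`. -/
def IsDescendant (S T : Set ℕ) : Prop :=
  IsNumSgp T ∧ T ⊆ S ∧ ∀ x ∈ S \ T, frob S < x

/-- The pseudo-ordinary semigroup `P_{m,u} = {0, m} ∪ {n : n ≥ m + u}`. -/
def P (m u : ℕ) : Set ℕ := {0, m} ∪ {n : ℕ | m + u ≤ n}

/-- The submonoid of ℕ generated by the interval `{a, …, b}`. -/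
def intervalSgp (a b : ℕ) : Set ℕ := (AddSubmonoid.closure (Set.Icc a b) : AddSubmonoid ℕ)


/-- gcd of a set, achieved as a finset gcd. -/
lemma exists_gcd (A : Set ℕ) : ∃ s : Finset ℕ, ↑s ⊆ A ∧ (∀ a ∈ A, s.gcd id ∣ a) := by
  by_cases hA : ∀ a ∈ A, a = 0
  · exact ⟨∅, by simp, fun a ha => by simp [hA a ha]⟩
  · push_neg at hA
    obtain ⟨m, hmA, hm0⟩ := hA
    set T : Set ℕ := {g | 0 < g ∧ ∃ s : Finset ℕ, ↑s ⊆ A ∧ s.gcd id = g} with hT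
    have hTne : T.Nonempty := ⟨m, Nat.pos_of_ne_zero hm0, {m}, by simpa using hmA, by simp⟩
    have hmem := Nat.sInf_mem hTne
    obtain ⟨hpos, s, hsA, hgcd⟩ := hmem
    refine ⟨s, hsA, fun a ha => ?_⟩
    rw [hgcd]
    by_contra hnd
    have hlt : Nat.gcd a (sInf T) < sInf T := by
      have h1 : Nat.gcd a (sInf T) ∣ sInf T := Nat.gcd_dvd_right _ _
      have h2 : Nat.gcd a (sInf T) ≠ sInf T := by
        intro h
        exact hnd (by rw [← h]; exact Nat.gcd_dvd_left _ _)
      exact lt_of_le_of_ne (Nat.le_of_dvd hpos h1) h2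
    have : Nat.gcd a (sInf T) ∈ T := by
      refine ⟨Nat.gcd_pos_of_pos_right _ hpos, insert a s, ?_, ?_⟩
      · intro x hx
        rcases Finset.mem_insert.mp (by exact_mod_cast hx) with h | h
        · exact h ▸ ha
        · exact hsA (by exact_mod_cast h)
      · rw [Finset.gcd_insert, hgcd]; rfl
    exact absurd (Nat.sInf_le this) (not_le.mpr hlt)

lemma setGcd_eq (A : Set ℕ) (d : ℕ) (h1 : ∀ a ∈ A, d ∣ a)
    (h2 : ∀ e, (∀ a ∈ A, e ∣ a) → e ∣ d) : setGcd A = d := by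
  have : {d' : ℕ | (∀ a ∈ A, d' ∣ a) ∧ ∀ e : ℕ, (∀ a ∈ A, e ∣ a) → e ∣ d'} = {d} := by
    ext d'
    simp only [Set.mem_setOf_eq, Set.mem_singleton_iff]
    constructor
    · rintro ⟨g1, g2⟩
      exact Nat.dvd_antisymm (h2 d' g1) (g2 d h1)
    · rintro rfl; exact ⟨h1, h2⟩
  rw [setGcd, this, csInf_singleton]

lemma setGcd_spec (A : Set ℕ) :
    (∀ a ∈ A, setGcd A ∣ a) ∧ ∀ e : ℕ, (∀ a ∈ A, e ∣ a) → e ∣ setGcd A := by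
  obtain ⟨s, hsA, hdvd⟩ := exists_gcd A
  have h2 : ∀ e : ℕ, (∀ a ∈ A, e ∣ a) → e ∣ s.gcd id :=
    fun e he => Finset.dvd_gcd fun i hi => he i (hsA hi)
  rw [setGcd_eq A (s.gcd id) hdvd h2]
  exact ⟨hdvd, h2⟩
/-- Solvability of `a*y ≡ n (mod d)` when `gcd a d ∣ n`. -/
lemma solve_mod (a d n : ℕ) (hd : 0 < d) (h : Nat.gcd a d ∣ n) :
    ∃ y < d, a * y ≡ n [MOD d] := by
  set g := Nat.gcd a d with hg
  have hgpos : 0 < g := Nat.gcd_pos_of_pos_right a hd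
  obtain ⟨n', rfl⟩ := h
  obtain ⟨a', ha'⟩ : g ∣ a := Nat.gcd_dvd_left a d
  obtain ⟨d', hd'⟩ : g ∣ d := Nat.gcd_dvd_right a d
  have hd'pos : 0 < d' := by
    rcases Nat.eq_zero_or_pos d' with h0 | h0
    · rw [h0, mul_zero] at hd'; omega
    · exact h0
  have hcop : Nat.Coprime a' d' := by
    have key : g * Nat.gcd a' d' = g * 1 := by
      rw [← Nat.gcd_mul_left, ← ha', ← hd', mul_one]
    exact Nat.eq_of_mul_eq_mul_left hgpos key
  rcases Nat.lt_or_ge d' 2 with h2 | h2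
  · have hd1 : d' = 1 := by omega
    refine ⟨0, hd, ?_⟩
    have hdg : d ∣ g * n' := by rw [hd', hd1, mul_one]; exact Dvd.intro n' rfl
    simpa using ((Nat.modEq_zero_iff_dvd).mpr hdg).symm
  · obtain ⟨m, -, hm⟩ := Nat.exists_mul_mod_eq_one_of_coprime hcop h2
    refine ⟨(m * n') % d', ?_, ?_⟩
    · calc (m * n') % d' < d' := Nat.mod_lt _ hd'pos
        _ ≤ d := by rw [hd']; exact Nat.le_mul_of_pos_left d' hgpos
    · have step : a' * ((m * n') % d') ≡ n' [MOD d'] := by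
        calc a' * ((m * n') % d') ≡ a' * (m * n') [MOD d'] :=
              Nat.ModEq.mul_left a' (Nat.mod_modEq (m*n') d')
          _ = (a' * m) * n' := by ring
          _ ≡ 1 * n' [MOD d'] := Nat.ModEq.mul_right n'
              (show a' * m % d' = 1 % d' by rw [hm, Nat.mod_eq_of_lt (by omega)])
          _ = n' := by ring
      have := Nat.ModEq.mul_left' (c := g) step
      rw [← mul_assoc, ← ha', ← hd'] at this
      exact this
lemma mem_closure_singleton_of_dvd {a n : ℕ} (h : a ∣ n) :
    n ∈ AddSubmonoid.closure ({a} : Set ℕ) := by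
  obtain ⟨t, rfl⟩ := h
  exact AddSubmonoid.mem_closure_singleton.mpr ⟨t, by rw [smul_eq_mul, mul_comm]⟩

/-- closure of a finset contains all big multiples of its gcd. -/
lemma finset_closure_large (s : Finset ℕ) :
    ∃ N, ∀ n, s.gcd id ∣ n → N ≤ n → n ∈ AddSubmonoid.closure (↑s : Set ℕ) := by
  induction s using Finset.induction_on with
  | empty =>
      exact ⟨0, fun n hdvd _ => by
        rw [Finset.gcd_empty] at hdvd
        simp [Nat.eq_zero_of_zero_dvd hdvd]⟩
  | @insert a s ha IH =>
      obtain ⟨N, hN⟩ := IH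
      set d := s.gcd id with hd
      have hsub : (↑s : Set ℕ) ⊆ (↑(insert a s) : Set ℕ) := by
        intro x hx; simp at hx ⊢; tauto
      have hmono := AddSubmonoid.closure_mono hsub
      have hasub : ({a} : Set ℕ) ⊆ (↑(insert a s) : Set ℕ) := by simp
      have hamono := AddSubmonoid.closure_mono hasub
      rcases Nat.eq_zero_or_pos d with hd0 | hdpos
      · -- all elements of s are 0, gcd insert = a
        refine ⟨0, fun n hdvd _ => ?_⟩
        rw [Finset.gcd_insert, ← hd, hd0, gcd_zero_right, id_eq, normalize_eq] at hdvd
        exact hamono (mem_closure_singleton_of_dvd hdvd)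
      · refine ⟨N + a * d, fun n hdvd hn => ?_⟩
        rw [Finset.gcd_insert, ← hd] at hdvd
        have hdvd' : Nat.gcd a d ∣ n := hdvd
        obtain ⟨y, hy, hmod⟩ := solve_mod a d n hdpos hdvd'
        have hay : a * y ≤ n := by
          have : a * y ≤ a * (d - 1) := Nat.mul_le_mul_left a (by omega)
          have h2 : a * (d - 1) ≤ a * d := Nat.mul_le_mul_left a (by omega)
          omega
        have hdvd2 : d ∣ n - a * y := (Nat.modEq_iff_dvd' hay).mp hmod
        have hmem : n - a * y ∈ AddSubmonoid.closure (↑s : Set ℕ) := by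
          apply hN _ hdvd2
          have : a * y ≤ a * d := Nat.mul_le_mul_left a (by omega)
          omega
        have : n = a * y + (n - a * y) := by omega
        rw [this]
        exact AddSubmonoid.add_mem _ (hamono (mem_closure_singleton_of_dvd ⟨y, rfl⟩))
          (hmono hmem)
lemma conductor_le (S : Set ℕ) (N : ℕ) (h : ∀ n, N ≤ n → n ∈ S) : conductor S ≤ N := by
  rw [conductor]
  split_ifs with he
  · exact Nat.zero_le N
  · have hne : Sᶜ.Nonempty := Set.nonempty_iff_ne_empty.mpr he
    have hlt : ∀ g ∈ Sᶜ, g < N := by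
      intro g hg
      by_contra hge
      exact hg (h g (by omega))
    obtain ⟨g0, hg0⟩ := id hne
    have hN1 : 1 ≤ N := by have := hlt g0 hg0; omega
    have : sSup Sᶜ ≤ N - 1 := csSup_le hne (fun g hg => by have := hlt g hg; omega)
    rw [frob]; omega

lemma mem_of_conductor_le (S : Set ℕ) (hfin : Sᶜ.Finite) {n : ℕ} (h : conductor S ≤ n) :
    n ∈ S := by
  by_contra hn
  have hn' : n ∈ Sᶜ := hn
  have hne : Sᶜ ≠ ∅ := Set.nonempty_iff_ne_empty.mp ⟨n, hn'⟩
  rw [conductor, if_neg hne, frob] at h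
  have := le_csSup hfin.bddAbove hn'
  omega

/-- representation lemma: every `n ≥ N*k + (b-1)*(k-1)` is `k*x + b*y` with `x ≥ N`. -/
lemma rep (k b N : ℕ) (hcop : Nat.gcd b k = 1) (hk : 0 < k) (hb : 0 < b) :
    ∀ n, N * k + (b - 1) * (k - 1) ≤ n → ∃ x y : ℕ, N ≤ x ∧ n = k * x + b * y := by
  obtain ⟨k', rfl⟩ : ∃ k', k = k' + 1 := ⟨k - 1, by omega⟩
  obtain ⟨b', rfl⟩ : ∃ b', b = b' + 1 := ⟨b - 1, by omega⟩
  intro n hn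
  simp only [Nat.add_sub_cancel] at hn
  have h1 : Nat.gcd (b' + 1) (k' + 1) ∣ n := by rw [hcop]; exact one_dvd n
  obtain ⟨y, hy, hmod⟩ := solve_mod (b' + 1) (k' + 1) n hk h1
  have hyb2 : (b' + 1) * y ≤ b' * k' + k' := by
    have : (b' + 1) * y ≤ (b' + 1) * k' := Nat.mul_le_mul_left _ (by omega)
    nlinarith
  have hby : (b' + 1) * y ≤ n := by
    by_contra hgt
    push_neg at hgt
    have hdvd : (k' + 1) ∣ (b' + 1) * y - n := (Nat.modEq_iff_dvd' (le_of_lt hgt)).mp hmod.symm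
    have hpos : 0 < (b' + 1) * y - n := by omega
    have hk2 : k' + 1 ≤ (b' + 1) * y - n := Nat.le_of_dvd hpos hdvd
    have hk3 : n + k' + 1 ≤ (b' + 1) * y := by omega
    nlinarith [hn, hyb2, hk3]
  have hdvd : (k' + 1) ∣ n - (b' + 1) * y := (Nat.modEq_iff_dvd' hby).mp hmod
  obtain ⟨x, hx⟩ := hdvd
  have hn2 : (k' + 1) * x + (b' + 1) * y = n := by rw [← hx, Nat.sub_add_cancel hby]
  refine ⟨x, y, ?_, hn2.symm⟩
  by_contra hxN
  push_neg at hxN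
  have h5 : (x + 1) * (k' + 1) ≤ N * (k' + 1) := Nat.mul_le_mul_right _ hxN
  nlinarith [hn, hyb2, hn2, h5]


/-- If `c + 1` is a right generator of the non-ordinary semigroup `Λ`, and
`Λ̃ = Λ \ {c+1}`, `ω̃ = ω(Λ̃)`, then `ω̃ = gcd(ω, c)`,
`shrink(Λ̃) = (ω/ω̃)·shrink(Λ) + (c/ω̃)·ℕ`, and
`c(shrink(Λ̃)) ≤ c(shrink(Λ))·(ω/ω̃) + (c/ω̃ - 1)·(ω/ω̃ - 1)`. -/
theorem stmt11 (Λ : Set ℕ) (h : IsNumSgp Λ) (hord : ¬ IsOrdinary Λ)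
    (hσ : IsRightGen Λ (conductor Λ + 1)) :
    omega' (Λ \ {conductor Λ + 1}) = Nat.gcd (omega' Λ) (conductor Λ) ∧
    shrink (Λ \ {conductor Λ + 1}) =
      (fun x => (omega' Λ / omega' (Λ \ {conductor Λ + 1})) * x) '' shrink Λ
        + (fun n => (conductor Λ / omega' (Λ \ {conductor Λ + 1})) * n) '' (Set.univ : Set ℕ) ∧
    conductor (shrink (Λ \ {conductor Λ + 1})) ≤
      conductor (shrink Λ) * (omega' Λ / omega' (Λ \ {conductor Λ + 1}))
        + (conductor Λ / omega' (Λ \ {conductor Λ + 1}) - 1)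
          * (omega' Λ / omega' (Λ \ {conductor Λ + 1}) - 1) := by
  have hfin := h.cofinite
  -- Λ has gaps
  have hcne : Λᶜ.Nonempty := by
    rw [Set.nonempty_iff_ne_empty]
    intro he
    exact hord (by rw [IsOrdinary, genus, he]; simp)
  have hFgap : frob Λ ∈ Λᶜ := hcne.csSup_mem hfin
  have hcond : conductor Λ = frob Λ + 1 := by
    rw [conductor, if_neg (Set.nonempty_iff_ne_empty.mp hcne)]
  have hbig : ∀ n, frob Λ < n → n ∈ Λ := by
    intro n hn
    by_contra hnn
    exact absurd (le_csSup hfin.bddAbove hnn) (by rw [frob] at hn; omega)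
  have hFpos : 0 < frob Λ := by
    rcases Nat.eq_zero_or_pos (frob Λ) with h0 | h0
    · exact absurd h.zero_mem (h0 ▸ hFgap)
    · exact h0
  have hcmem : frob Λ + 1 ∈ Λ := hbig _ (by omega)
  -- a positive left element
  have hmL : ∃ m, m ∈ leftEls Λ ∧ 0 < m := by
    by_contra hno
    push_neg at hno
    apply hord
    have hgaps : Λᶜ = Set.Icc 1 (frob Λ) := by
      ext x
      simp only [Set.mem_compl_iff, Set.mem_Icc]
      constructor
      · intro hx
        have hx1 : 1 ≤ x := by
          rcases Nat.eq_zero_or_pos x with rfl | h1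
          · exact absurd h.zero_mem hx
          · exact h1
        exact ⟨hx1, le_csSup hfin.bddAbove hx⟩
      · rintro ⟨h1, h2⟩ hxΛ
        rcases lt_or_eq_of_le h2 with hlt | heq
        · exact absurd (hno x ⟨hxΛ, hlt⟩) (by omega)
        · exact hFgap (heq ▸ hxΛ)
    have hcard : (Set.Icc 1 (frob Λ)).ncard = frob Λ := by
      rw [← Finset.coe_Icc, Set.ncard_coe_finset, Nat.card_Icc]
      omega
    rw [IsOrdinary, genus, hgaps, hcard]
  obtain ⟨m, hmLmem, hmpos⟩ := hmL
  -- omega facts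
  have hωspec := setGcd_spec (leftEls Λ)
  have hωdvd : ∀ a ∈ leftEls Λ, omega' Λ ∣ a := hωspec.1
  have hωpos : 0 < omega' Λ := by
    rcases Nat.eq_zero_or_pos (omega' Λ) with h0 | h0
    · have := hωdvd m hmLmem
      rw [h0] at this
      simp at this
      omega
    · exact h0
  -- the pruned semigroup
  set σ := conductor Λ + 1 with hσdef
  have hσmem : σ ∈ Λ := hσ.1.2.1
  have hcompl2 : (Λ \ {σ})ᶜ = Λᶜ ∪ {σ} := by
    ext x
    simp only [Set.mem_compl_iff, Set.mem_diff, Set.mem_singleton_iff, Set.mem_union]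
    tauto
  have hfin2 : (Λ \ {σ})ᶜ.Finite := by
    rw [hcompl2]; exact hfin.union (Set.finite_singleton σ)
  have hfrob2 : frob (Λ \ {σ}) = σ := by
    rw [frob, hcompl2]
    apply le_antisymm
    · apply csSup_le ⟨σ, Or.inr rfl⟩
      rintro g (hg | rfl)
      · have : g ≤ frob Λ := le_csSup hfin.bddAbove hg
        omega
      · exact le_refl σ
    · exact le_csSup (hfin.union (Set.finite_singleton σ)).bddAbove (Or.inr rfl)
  have hleft2 : leftEls (Λ \ {σ}) = leftEls Λ ∪ {frob Λ + 1} := by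
    ext x
    simp only [leftEls, hfrob2, Set.mem_setOf_eq, Set.mem_diff, Set.mem_singleton_iff,
      Set.mem_union]
    constructor
    · rintro ⟨⟨hxΛ, hxne⟩, hxlt⟩
      rcases Nat.lt_or_ge x (frob Λ) with hlt | hge
      · exact Or.inl ⟨hxΛ, hlt⟩
      · right
        have : x ≠ frob Λ := fun hx => hFgap (hx ▸ hxΛ)
        omega
    · rintro (⟨hxΛ, hxlt⟩ | rfl)
      · exact ⟨⟨hxΛ, by omega⟩, by omega⟩
      · exact ⟨⟨hcmem, by omega⟩, by omega⟩
  -- part 1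
  have part1 : omega' (Λ \ {σ}) = Nat.gcd (omega' Λ) (conductor Λ) := by
    rw [omega', hleft2, ← hcond]
    apply setGcd_eq
    · rintro a (ha | rfl)
      · exact dvd_trans (Nat.gcd_dvd_left _ _) (hωdvd a ha)
      · exact Nat.gcd_dvd_right _ _
    · intro e he
      exact Nat.dvd_gcd (hωspec.2 e (fun a ha => he a (Or.inl ha))) (he _ (Or.inr rfl))
  refine ⟨part1, ?_⟩
  set ω := omega' Λ with hωdef
  set c := conductor Λ with hcdef
  set ωt := Nat.gcd ω c with hωtdef
  have hωtpos : 0 < ωt := Nat.gcd_pos_of_pos_left c hωpos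
  set k := ω / ωt with hkdef
  set b := c / ωt with hbdef
  have hωtω : ωt ∣ ω := Nat.gcd_dvd_left _ _
  have hωtc : ωt ∣ c := Nat.gcd_dvd_right _ _
  have hkpos : 0 < k := Nat.div_pos (Nat.le_of_dvd hωpos hωtω) hωtpos
  have hbpos : 0 < b := Nat.div_pos (Nat.le_of_dvd (by omega) hωtc) hωtpos
  have hcop : Nat.gcd b k = 1 := by
    have := Nat.coprime_div_gcd_div_gcd (m := ω) (n := c) hωtpos
    exact Nat.Coprime.gcd_eq_one (Nat.Coprime.symm this)
  set SL := (fun x => x / ω) '' leftEls Λ with hSLdef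
  have part2 : shrink (Λ \ {σ}) =
      (fun x => k * x) '' shrink Λ + (fun n => b * n) '' (Set.univ : Set ℕ) := by
    have hdiv : ∀ a ∈ leftEls Λ, a / ωt = k * (a / ω) := by
      intro a ha
      obtain ⟨t, hat⟩ := hωdvd a ha
      obtain ⟨u, hu⟩ := hωtω
      have e1 : a / ωt = u * t := by rw [hat, hu, mul_assoc, Nat.mul_div_cancel_left _ hωtpos]
      have e2 : a / ω = t := by rw [hat, Nat.mul_div_cancel_left t hωpos]
      have e3 : k = u := by rw [hkdef, hu, Nat.mul_div_cancel_left u hωtpos]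
      rw [e1, e2, e3]
    have himg : (fun x => x / ωt) '' (leftEls Λ ∪ {frob Λ + 1})
        = ((fun x => k * x) '' SL) ∪ {b} := by
      rw [Set.image_union, Set.image_singleton, hSLdef, Set.image_image]
      congr 1
      · exact Set.image_congr hdiv
      · rw [← hcond]
    have hcoe : ((fun x => k * x) '' SL) = ⇑(AddMonoidHom.mulLeft k) '' SL := rfl
    have hshr : shrink (Λ \ {σ}) =
        ↑(AddSubmonoid.closure ((fun x => x / ωt) '' (leftEls Λ ∪ {frob Λ + 1}))) := by
      rw [shrink, part1, hleft2]
    rw [hshr, himg, hcoe, AddSubmonoid.closure_union, ← AddMonoidHom.map_mclosure]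
    ext x
    constructor
    · intro hx
      rw [SetLike.mem_coe, AddSubmonoid.mem_sup] at hx
      obtain ⟨y, hy, z, hz, rfl⟩ := hx
      obtain ⟨s2, hs2, rfl⟩ := AddSubmonoid.mem_map.mp hy
      obtain ⟨n, rfl⟩ := AddSubmonoid.mem_closure_singleton.mp hz
      refine Set.mem_add.mpr ⟨k * s2, ⟨s2, hs2, rfl⟩, b * n, ⟨n, trivial, rfl⟩, ?_⟩
      simp [AddMonoidHom.coe_mulLeft, smul_eq_mul, mul_comm]
    · intro hx
      obtain ⟨u2, ⟨s2, hs2, rfl⟩, v2, ⟨n, -, rfl⟩, rfl⟩ := Set.mem_add.mp hx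
      rw [SetLike.mem_coe, AddSubmonoid.mem_sup]
      refine ⟨k * s2, AddSubmonoid.mem_map.mpr ⟨s2, hs2, rfl⟩, b * n,
        AddSubmonoid.mem_closure_singleton.mpr ⟨n, by rw [smul_eq_mul, mul_comm]⟩, rfl⟩
  rw [part1]
  refine ⟨part2, ?_⟩
  -- cofiniteness of shrink Λ
  obtain ⟨s, hsSL, hsdvd⟩ := exists_gcd SL
  have hs1 : s.gcd id = 1 := by
    have hdvdω : ω * s.gcd id ∣ ω := by
      apply hωspec.2
      intro a ha
      obtain ⟨t, hat⟩ := hωdvd a ha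
      have ht : s.gcd id ∣ t := by
        apply hsdvd
        exact ⟨a, ha, by show a / ω = t; rw [hat, Nat.mul_div_cancel_left t hωpos]⟩
      rw [hat]
      exact mul_dvd_mul_left ω ht
    have h1 : s.gcd id ∣ 1 := by
      have := hdvdω
      rw [show ω = ω * 1 by ring] at this
      exact (mul_dvd_mul_iff_left (show ω ≠ 0 by omega)).mp (by rw [mul_one] at this ⊢; exact this)
    exact Nat.dvd_one.mp h1
  obtain ⟨N, hN⟩ := finset_closure_large s
  have hShrinkBig : ∀ n, N ≤ n → n ∈ shrink Λ := fun n hn =>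
    (AddSubmonoid.closure_mono hsSL) (hN n (by rw [hs1]; exact one_dvd n) hn)
  have hfinS : (shrink Λ)ᶜ.Finite := Set.Finite.subset (Set.finite_Iio N) (fun x hx => by
    simp only [Set.mem_Iio]
    by_contra hge
    push_neg at hge
    exact hx (hShrinkBig x hge))
  apply conductor_le
  intro n hn
  obtain ⟨x, y, hx, rfl⟩ := rep k b (conductor (shrink Λ)) hcop hkpos hbpos n hn
  rw [part2]
  exact Set.mem_add.mpr ⟨k * x, ⟨x, mem_of_conductor_le _ hfinS hx, rfl⟩, b * y,
    ⟨y, trivial, rfl⟩, rfl⟩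

end NumSgpPaper
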